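/- Fix a constant Λ > 1. For every ε > 0 there exists a Lipschitz map f : [0,1]² → ℝ with Θ^{*1}(f,x) = Θ_*^1(f,x) = |J^1 f|(x) = 1 for almost every x, with the following property: for every measurable set K ⊂ [0,1]² and every Λ-bi-Lipschitz homeomorphism G : ℝ² → ℝ² such that the restriction of f∘G⁻¹ to (ℝ × {y}) ∩ G(K) is Λ-bi-Lipschitz for every y ∈ ℝ, one has ℋ²(K) < ε. -/

import Mathlib

open MeasureTheory Metric Set Filter
open scoped ENNReal NNReal Topology

noncomputable section

abbrev EucSp (k : ℕ) := EuclideanSpace ℝ (Fin k)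

/-- The volume of the unit ball in `ℝ^n`. -/
def unitBallVol (n : ℕ) : ℝ≥0∞ := volume (Metric.ball (0 : EucSp n) 1)

/-- The `n`-dimensional Hausdorff content. -/
def hContent {X : Type*} [PseudoEMetricSpace X] (n : ℕ) (E : Set X) : ℝ≥0∞ :=
  ⨅ (A : ℕ → Set X) (_ : E ⊆ ⋃ i, A i),
    unitBallVol n / 2 ^ n * ∑' i, EMetric.diam (A i) ^ n

/-- Upper n-density. -/
def upperDensity {k : ℕ} {X : Type*} [PseudoEMetricSpace X] (n : ℕ)
    (f : EucSp k → X) (A : Set (EucSp k)) (x : EucSp k) : ℝ≥0∞ :=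
  Filter.limsup
    (fun r : ℝ => hContent n (f '' (Metric.ball x r ∩ A)) /
      (unitBallVol n * ENNReal.ofReal r ^ n)) (𝓝[>] (0:ℝ))

def lowerDensity {k : ℕ} {X : Type*} [PseudoEMetricSpace X] (n : ℕ)
    (f : EucSp k → X) (A : Set (EucSp k)) (x : EucSp k) : ℝ≥0∞ :=
  Filter.liminf
    (fun r : ℝ => hContent n (f '' (Metric.ball x r ∩ A)) /
      (unitBallVol n * ENNReal.ofReal r ^ n)) (𝓝[>] (0:ℝ))

def IsDensityPoint {k : ℕ} (E : Set (EucSp k)) (x : EucSp k) : Prop :=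
  Filter.Tendsto (fun r : ℝ => volume (E ∩ Metric.ball x r) / volume (Metric.ball x r))
    (𝓝[>] (0:ℝ)) (𝓝 1)

def HasApproxDerivWithinAt {k : ℕ} (A : Set (EucSp k)) (f : EucSp k → ℝ)
    (L : EucSp k →ₗ[ℝ] ℝ) (x : EucSp k) : Prop :=
  ∃ Ax : Set (EucSp k), Ax ⊆ A ∧ MeasurableSet Ax ∧ IsDensityPoint Ax x ∧
    Filter.Tendsto (fun y => |f y - f x - L (y - x)| / ‖y - x‖) (𝓝[Ax] x) (𝓝 0)

abbrev LpInfty := lp (fun _ : ℕ => ℝ) ∞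

def HasCompApproxDerivWithinAt {k : ℕ} (A : Set (EucSp k)) (f : EucSp k → LpInfty)
    (D : EucSp k →ₗ[ℝ] (ℕ → ℝ)) (x : EucSp k) : Prop :=
  ∀ i : ℕ, HasApproxDerivWithinAt A (fun y => f y i) ((LinearMap.proj i).comp D) x

def IsBiLipC1DiffeoOn {k : ℕ} (G Ginv : EucSp k → EucSp k) (U : Set (EucSp k)) : Prop :=
  IsOpen U ∧ IsOpen (G '' U) ∧ (∀ x ∈ U, Ginv (G x) = x) ∧ (∀ y ∈ G '' U, G (Ginv y) = y) ∧
    ContDiffOn ℝ 1 G U ∧ ContDiffOn ℝ 1 Ginv (G '' U) ∧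
    ∃ Λ : ℝ≥0, LipschitzOnWith Λ G U ∧ LipschitzOnWith Λ Ginv (G '' U)

def IsFinCoordPerm (Ψ : LpInfty → LpInfty) : Prop :=
  ∃ σ : Equiv.Perm ℕ, {i | σ i ≠ i}.Finite ∧ ∀ (x : LpInfty) (i : ℕ), Ψ x i = x (σ i)

def openCube {k : ℕ} (c : EucSp k) (d : ℝ) : Set (EucSp k) := {x | ∀ i, |x i - c i| < d / 2}

def closedCube {k : ℕ} (c : EucSp k) (d : ℝ) : Set (EucSp k) := {x | ∀ i, |x i - c i| ≤ d / 2}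

def hnmContent {N : ℕ} {X : Type*} [PseudoEMetricSpace X] (n m : ℕ)
    (f : EucSp N → X) (Q : Set (EucSp N)) : ℝ≥0∞ :=
  ⨅ (c : ℕ → EucSp N) (d : ℕ → ℝ) (_ : ∀ j, 0 ≤ d j) (_ : ∀ j, openCube (c j) (d j) ⊆ Q)
    (_ : Pairwise (Function.onFun Disjoint fun j => openCube (c j) (d j)))
    (_ : volume (Q \ ⋃ j, openCube (c j) (d j)) = 0),
    ∑' j, hContent n (f '' openCube (c j) (d j)) * ENNReal.ofReal (d j) ^ m

def matrixRow {n k : ℕ} (D : Matrix (Fin n) (Fin k) ℝ) (i : Fin n) : EucSp k →ₗ[ℝ] ℝ :=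
  (EuclideanSpace.proj i).toLinearMap.comp (Matrix.toEuclideanLin D)

def jacDet {n k : ℕ} (D : Matrix (Fin n) (Fin k) ℝ) : ℝ := Real.sqrt ((D * D.transpose).det)

def upperLintegral {Y : Type*} [MeasurableSpace Y] (μ : Measure Y) (g : Y → ℝ≥0∞) : ℝ≥0∞ :=
  ⨅ (h : Y → ℝ≥0∞) (_ : Measurable h) (_ : ∀ y, g y ≤ h y), ∫⁻ y, h y ∂μ


/-- The unit square `[0,1]² ⊆ ℝ²`. -/
def unitSquare : Set (EucSp 2) := {x | ∀ i, x i ∈ Set.Icc (0 : ℝ) 1}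

section AuxLemmas

lemma le_infDist' {α : Type*} [MetricSpace α] {x : α} {b : ℝ} {s : Set α} (hs : s.Nonempty)
    (h : ∀ y ∈ s, b ≤ dist x y) : b ≤ Metric.infDist x s := by
  by_contra hb
  push_neg at hb
  obtain ⟨y, hy, hlt⟩ := (Metric.infDist_lt_iff hs).1 hb
  exact absurd (h y hy) (not_le.2 hlt)

def saw (d : ℝ) : ℝ → ℝ := fun t => Metric.infDist t (Set.range fun k : ℤ => d * k)

lemma saw_lip (d : ℝ) : LipschitzWith 1 (saw d) := lipschitz_infDist_pt _

lemma saw_mem (d : ℝ) (hd : 0 < d) (t : ℝ) : saw d t ∈ Set.Icc 0 (d/2) := by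
  refine ⟨Metric.infDist_nonneg, ?_⟩
  have h1 : saw d t ≤ dist t (d * round (t/d)) :=
    Metric.infDist_le_dist_of_mem ⟨round (t/d), rfl⟩
  have h2 : |t/d - round (t/d)| ≤ 1/2 := abs_sub_round _
  have h0 : dist t (d * round (t/d)) = |t - d * round (t/d)| := Real.dist_eq _ _
  have h3 : |t - d * round (t/d)| = d * |t/d - round (t/d)| := by
    rw [show t - d * (round (t/d) : ℝ) = d * (t/d - round (t/d)) by field_simp, abs_mul,
      abs_of_pos hd]
  nlinarith [h1, h2]

lemma saw_lower (d : ℝ) (hd : 0 < d) (k : ℤ) (u : ℝ) (h1 : d * k ≤ u) (h2 : u ≤ d * k + d/2) :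
    saw d u = u - d * k := by
  refine le_antisymm ?_ ?_
  · have hmem : d * (k:ℝ) ∈ Set.range (fun k : ℤ => d * (k:ℝ)) := Set.mem_range.mpr ⟨k, rfl⟩
    have := Metric.infDist_le_dist_of_mem (x := u) hmem
    rwa [Real.dist_eq, abs_of_nonneg (by linarith)] at this
  · refine le_infDist' ⟨d * k, ⟨k, rfl⟩⟩ ?_
    rintro y ⟨j, rfl⟩
    have hb : (fun k : ℤ => d * (k : ℝ)) j = d * j := rfl
    rw [hb, Real.dist_eq]
    rcases le_or_gt (j : ℝ) (k : ℝ) with hj | hj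
    · have : d * j ≤ d * k := by nlinarith
      rw [abs_of_nonneg (by linarith)]; linarith
    · have hj' : (k : ℝ) + 1 ≤ j := by exact_mod_cast hj
      have : d * ((k : ℝ) + 1) ≤ d * j := by nlinarith
      rw [abs_sub_comm, abs_of_nonneg (by nlinarith)]; nlinarith

lemma saw_upper (d : ℝ) (hd : 0 < d) (k : ℤ) (u : ℝ) (h1 : d * k + d/2 ≤ u) (h2 : u ≤ d * (k+1)) :
    saw d u = d * (k + 1) - u := by
  refine le_antisymm ?_ ?_
  · have hmem : d * ((k:ℝ)+1) ∈ Set.range (fun k : ℤ => d * (k:ℝ)) :=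
      Set.mem_range.mpr ⟨k+1, by push_cast; ring⟩
    have := Metric.infDist_le_dist_of_mem (x := u) hmem
    rwa [Real.dist_eq, abs_sub_comm, abs_of_nonneg (by linarith)] at this
  · refine le_infDist' ⟨d * k, ⟨k, rfl⟩⟩ ?_
    rintro y ⟨j, rfl⟩
    have hb : (fun k : ℤ => d * (k : ℝ)) j = d * j := rfl
    rw [hb, Real.dist_eq]
    rcases le_or_gt ((j : ℝ)) (k : ℝ) with hj | hj
    · have : d * j ≤ d * k := by nlinarith
      rw [abs_of_nonneg (by linarith)]; linarith
    · have hj' : (k : ℝ) + 1 ≤ j := by exact_mod_cast hj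
      have : d * ((k : ℝ) + 1) ≤ d * j := by nlinarith
      rw [abs_sub_comm, abs_of_nonneg (by linarith)]; linarith

lemma saw_affine (d : ℝ) (hd : 0 < d) (t : ℝ) (ht : ∀ k : ℤ, t ≠ d/2 * k) :
    ∃ r0 > 0, ∃ c : ℝ,
      (∀ u : ℝ, |u - t| < r0 → saw d u = u + c) ∨ (∀ u : ℝ, |u - t| < r0 → saw d u = c - u) := by
  set k : ℤ := ⌊t/d⌋ with hk
  have hfl : d * k ≤ t := by
    have := Int.floor_le (t/d)
    calc d * (k:ℝ) ≤ d * (t/d) := by nlinarith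
    _ = t := by field_simp
  have hfu : t < d * (k+1) := by
    have := Int.lt_floor_add_one (t/d)
    calc t = d * (t/d) := by field_simp
    _ < d * (k+1) := by nlinarith
  set v : ℝ := t - d * k with hv
  have hv0 : 0 ≤ v := by linarith
  have hvd : v < d := by push_cast at hfu ⊢; linarith
  have hvne : v ≠ 0 := by
    intro h
    exact ht (2*k) (by push_cast; nlinarith [h])
  have hvne2 : v ≠ d/2 := by
    intro h
    exact ht (2*k+1) (by push_cast; nlinarith [h])
  rcases lt_or_gt_of_ne hvne2 with hlt | hgt
  · refine ⟨min v (d/2 - v), lt_min (lt_of_le_of_ne hv0 (Ne.symm hvne)) (by linarith), -(d*k),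
      Or.inl fun u hu => ?_⟩
    have h1 : |u - t| < v := lt_of_lt_of_le hu (min_le_left _ _)
    have h2 : |u - t| < d/2 - v := lt_of_lt_of_le hu (min_le_right _ _)
    rw [abs_lt] at h1 h2
    rw [saw_lower d hd k u (by linarith) (by linarith)]
    ring
  · have hgt' : d/2 < v := hgt
    refine ⟨min (v - d/2) (d - v), lt_min (by linarith) (by linarith), d*(k+1),
      Or.inr fun u hu => ?_⟩
    have h1 : |u - t| < v - d/2 := lt_of_lt_of_le hu (min_le_left _ _)
    have h2 : |u - t| < d - v := lt_of_lt_of_le hu (min_le_right _ _)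
    rw [abs_lt] at h1 h2
    rw [saw_upper d hd k u (by linarith) (by push_cast; linarith)]

lemma unitBallVol_pos (n : ℕ) : 0 < unitBallVol n :=
  Metric.measure_ball_pos _ _ one_pos

lemma unitBallVol_lt_top (n : ℕ) : unitBallVol n < ⊤ := measure_ball_lt_top

lemma hContent_le_diam {X : Type*} [PseudoEMetricSpace X] (E : Set X) :
    hContent 1 E ≤ unitBallVol 1 / 2 * EMetric.diam E := by
  have h : E ⊆ ⋃ i : ℕ, (fun i => if i = 0 then E else (∅ : Set X)) i := by
    intro x hx
    exact Set.mem_iUnion.mpr ⟨0, by simpa using hx⟩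
  refine le_trans (iInf₂_le (fun i => if i = 0 then E else (∅ : Set X)) h) ?_
  have : (∑' i : ℕ, EMetric.diam ((fun i => if i = 0 then E else (∅ : Set X)) i) ^ 1)
      = EMetric.diam E := by
    rw [tsum_eq_single 0]
    · simp
    · intro b hb
      simp [hb]; exact Metric.ediam_empty
  rw [this]
  simp [pow_one]

lemma le_hContent (E : Set ℝ) : unitBallVol 1 / 2 * volume E ≤ hContent 1 E := by
  refine le_iInf₂ fun A hA => ?_
  simp only [pow_one]
  refine mul_le_mul_right ?_ (unitBallVol 1 / 2)
  calc volume E ≤ volume (⋃ i, A i) := measure_mono hA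
  _ ≤ ∑' i, volume (A i) := measure_iUnion_le _
  _ ≤ ∑' i, EMetric.diam (A i) := ENNReal.tsum_le_tsum fun i => Real.volume_le_diam _

lemma coord_le_dist (x y : EucSp 2) (i : Fin 2) : |x i - y i| ≤ dist x y := by
  rw [EuclideanSpace.dist_eq]
  have h1 : |x i - y i| = Real.sqrt ((x i - y i)^2) := (Real.sqrt_sq_eq_abs _).symm
  rw [h1]
  apply Real.sqrt_le_sqrt
  have : (x i - y i)^2 = dist (x i) (y i) ^ 2 := by rw [Real.dist_eq, sq_abs]
  rw [this]
  exact Finset.single_le_sum (fun j _ => sq_nonneg (dist (x j) (y j))) (Finset.mem_univ i)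

lemma lip_coord (i : Fin 2) : LipschitzWith 1 (fun x : EucSp 2 => x i) := by
  apply LipschitzWith.of_dist_le_mul
  intro x y
  simpa [Real.dist_eq] using coord_le_dist x y i

lemma dist_le_two {a b : EucSp 2} (ha : a ∈ unitSquare) (hb : b ∈ unitSquare) : dist a b ≤ 2 := by
  rw [EuclideanSpace.dist_eq]
  have hle : ∀ i : Fin 2, dist (a i) (b i) ^ 2 ≤ 1 := by
    intro i
    have h1 := (ha i).1; have h2 := (ha i).2; have h3 := (hb i).1; have h4 := (hb i).2
    rw [Real.dist_eq]
    have habs : |a i - b i| ≤ 1 := abs_sub_le_iff.mpr ⟨by linarith, by linarith⟩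
    nlinarith [abs_nonneg (a i - b i), habs]
  have hsum : ∑ i : Fin 2, dist (a i) (b i) ^ 2 ≤ 2 := by
    calc ∑ i : Fin 2, dist (a i) (b i) ^ 2 ≤ ∑ _i : Fin 2, (1:ℝ) :=
      Finset.sum_le_sum fun i _ => hle i
    _ = 2 := by simp
  calc Real.sqrt (∑ i, dist (a i) (b i) ^ 2) ≤ Real.sqrt 4 := by
        apply Real.sqrt_le_sqrt; linarith
  _ = 2 := by
        rw [show (4:ℝ) = 2^2 by norm_num, Real.sqrt_sq (by norm_num)]

lemma ball_subset_unitSquare {x : EucSp 2} (hx : ∀ i, x i ∈ Set.Ioo (0:ℝ) 1) :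
    ∃ ρ > 0, Metric.ball x ρ ⊆ unitSquare := by
  refine ⟨min (min (x 0) (1 - x 0)) (min (x 1) (1 - x 1)), ?_, ?_⟩
  · have h0 := hx 0; have h1 := hx 1
    simp only [lt_min_iff]
    exact ⟨⟨h0.1, by linarith [h0.2]⟩, ⟨h1.1, by linarith [h1.2]⟩⟩
  · intro y hy i
    have hd : |y i - x i| ≤ dist y x := coord_le_dist y x i
    have hlt : dist y x < min (min (x 0) (1 - x 0)) (min (x 1) (1 - x 1)) := Metric.mem_ball.1 hy
    have key : ∀ j : Fin 2, dist y x < x j ∧ dist y x < 1 - x j := by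
      rw [Fin.forall_fin_two]
      simp only [lt_min_iff] at hlt
      exact ⟨hlt.1, hlt.2⟩
    have hd2 := abs_le.1 hd
    exact ⟨by linarith [(key i).1, hd2.1], by linarith [(key i).2, hd2.2]⟩

lemma measurableSet_unitSquare : MeasurableSet unitSquare := by
  have : unitSquare = ⋂ i : Fin 2, (fun x : EucSp 2 => x i) ⁻¹' Set.Icc (0:ℝ) 1 := by
    ext x; simp [unitSquare]
  rw [this]
  exact MeasurableSet.iInter fun i =>
    ((lip_coord i).continuous.measurable) measurableSet_Icc

end AuxLemmas

section AuxLemmas2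

lemma two_mul_ofReal (z : ℝ≥0∞) : unitBallVol 1 / 2 * (2 * z) = unitBallVol 1 * z := by
  rw [← mul_assoc, ENNReal.div_mul_cancel two_ne_zero ENNReal.ofNat_ne_top]

lemma ofReal_two_mul (r : ℝ) : ENNReal.ofReal (2 * r) = 2 * ENNReal.ofReal r := by
  rw [ENNReal.ofReal_mul (by norm_num)]
  norm_num

lemma himage (d : ℝ) {x : EucSp 2} {c r0 ρ : ℝ}
    (hball : Metric.ball x ρ ⊆ unitSquare)
    (haff : (∀ u : ℝ, |u - x 0| < r0 → saw d u = u + c) ∨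
      (∀ u : ℝ, |u - x 0| < r0 → saw d u = c - u))
    {r : ℝ} (hr : 0 < r) (hrρ : r ≤ ρ) (hrr0 : r ≤ r0) :
    hContent 1 ((fun y : EucSp 2 => saw d (y 0)) '' (Metric.ball x r ∩ unitSquare))
      = unitBallVol 1 * ENNReal.ofReal r := by
  have hsub : Metric.ball x r ∩ unitSquare = Metric.ball x r :=
    Set.inter_eq_self_of_subset_left ((Metric.ball_subset_ball hrρ).trans hball)
  rw [hsub]
  have lipf : LipschitzWith 1 (fun y : EucSp 2 => saw d (y 0)) := by
    have := (saw_lip d).comp (lip_coord 0)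
    simpa [Function.comp_def] using this
  refine le_antisymm ?_ ?_
  · have hdiam : EMetric.diam ((fun y : EucSp 2 => saw d (y 0)) '' Metric.ball x r)
        ≤ 2 * ENNReal.ofReal r := by
      calc EMetric.diam ((fun y : EucSp 2 => saw d (y 0)) '' Metric.ball x r)
          ≤ (1:ℝ≥0) * EMetric.diam (Metric.ball x r) := lipf.ediam_image_le _
      _ = EMetric.diam (Metric.eball x (ENNReal.ofReal r)) := by
          rw [Metric.emetric_ball]; simp
      _ ≤ 2 * ENNReal.ofReal r := EMetric.diam_ball
    calc hContent 1 ((fun y : EucSp 2 => saw d (y 0)) '' Metric.ball x r)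
        ≤ unitBallVol 1 / 2 * EMetric.diam ((fun y : EucSp 2 => saw d (y 0)) '' Metric.ball x r) :=
      hContent_le_diam _
    _ ≤ unitBallVol 1 / 2 * (2 * ENNReal.ofReal r) := mul_le_mul_right hdiam _
    _ = unitBallVol 1 * ENNReal.ofReal r := two_mul_ofReal _
  · have hIoo : saw d '' Set.Ioo (x 0 - r) (x 0 + r)
        ⊆ (fun y : EucSp 2 => saw d (y 0)) '' Metric.ball x r := by
      rintro - ⟨t, ht, rfl⟩
      refine ⟨(x + EuclideanSpace.single 0 (t - x 0) : EucSp 2), ?_, ?_⟩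
      · rw [Metric.mem_ball, dist_self_add_left, EuclideanSpace.norm_single, Real.norm_eq_abs,
          abs_lt]
        exact ⟨by linarith [ht.1], by linarith [ht.2]⟩
      · have hc : ((x + EuclideanSpace.single 0 (t - x 0) : EucSp 2)) 0 = t := by
          simp [EuclideanSpace.single_apply]
        simp only [hc]
    have hvol : ENNReal.ofReal (2 * r)
        ≤ volume ((fun y : EucSp 2 => saw d (y 0)) '' Metric.ball x r) := by
      have hIm : volume (saw d '' Set.Ioo (x 0 - r) (x 0 + r)) = ENNReal.ofReal (2 * r) := by
        rcases haff with hform | hform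
        · have heq : saw d '' Set.Ioo (x 0 - r) (x 0 + r)
              = (fun u => u + c) '' Set.Ioo (x 0 - r) (x 0 + r) := by
            apply Set.image_congr
            intro u hu
            apply hform
            rw [abs_lt]
            exact ⟨by linarith [hu.1, hrr0], by linarith [hu.2, hrr0]⟩
          rw [heq, Set.image_add_const_Ioo, Real.volume_Ioo]
          congr 1
          ring
        · have heq : saw d '' Set.Ioo (x 0 - r) (x 0 + r)
              = (fun u => c - u) '' Set.Ioo (x 0 - r) (x 0 + r) := by
            apply Set.image_congr
            intro u hu
            apply hform
            rw [abs_lt]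
            exact ⟨by linarith [hu.1, hrr0], by linarith [hu.2, hrr0]⟩
          rw [heq, Set.image_const_sub_Ioo, Real.volume_Ioo]
          congr 1
          ring
      calc ENNReal.ofReal (2*r) = volume (saw d '' Set.Ioo (x 0 - r) (x 0 + r)) := hIm.symm
      _ ≤ volume ((fun y : EucSp 2 => saw d (y 0)) '' Metric.ball x r) := measure_mono hIoo
    calc unitBallVol 1 * ENNReal.ofReal r = unitBallVol 1 / 2 * (2 * ENNReal.ofReal r) :=
      (two_mul_ofReal _).symm
    _ = unitBallVol 1 / 2 * ENNReal.ofReal (2 * r) := by rw [ofReal_two_mul r]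
    _ ≤ unitBallVol 1 / 2 * volume ((fun y : EucSp 2 => saw d (y 0)) '' Metric.ball x r) :=
      mul_le_mul_right hvol _
    _ ≤ hContent 1 ((fun y : EucSp 2 => saw d (y 0)) '' Metric.ball x r) := le_hContent _

end AuxLemmas2

section AuxLemmas3

lemma density_one (d : ℝ) {x : EucSp 2} {c r0 ρ : ℝ} (hρ : 0 < ρ) (hr0 : 0 < r0)
    (hball : Metric.ball x ρ ⊆ unitSquare)
    (haff : (∀ u : ℝ, |u - x 0| < r0 → saw d u = u + c) ∨
      (∀ u : ℝ, |u - x 0| < r0 → saw d u = c - u)) :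
    upperDensity 1 (fun y : EucSp 2 => saw d (y 0)) unitSquare x = 1 ∧
      lowerDensity 1 (fun y : EucSp 2 => saw d (y 0)) unitSquare x = 1 := by
  have hev : (fun r : ℝ =>
      hContent 1 ((fun y : EucSp 2 => saw d (y 0)) '' (Metric.ball x r ∩ unitSquare)) /
        (unitBallVol 1 * ENNReal.ofReal r ^ 1)) =ᶠ[𝓝[>] (0:ℝ)] fun _ => 1 := by
    have hmem : Set.Ioo (0:ℝ) (min ρ r0) ∈ 𝓝[>] (0:ℝ) :=
      Ioo_mem_nhdsGT_of_mem ⟨le_refl 0, lt_min hρ hr0⟩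
    filter_upwards [hmem] with r hrmem
    have hr : 0 < r := hrmem.1
    have h1 : r ≤ ρ := le_of_lt (lt_of_lt_of_le hrmem.2 (min_le_left _ _))
    have h2 : r ≤ r0 := le_of_lt (lt_of_lt_of_le hrmem.2 (min_le_right _ _))
    rw [himage d hball haff hr h1 h2, pow_one]
    refine ENNReal.div_self ?_ ?_
    · exact mul_ne_zero (unitBallVol_pos 1).ne' (ENNReal.ofReal_pos.2 hr).ne'
    · exact ENNReal.mul_ne_top (unitBallVol_lt_top 1).ne ENNReal.ofReal_ne_top
  constructor
  · rw [upperDensity, Filter.limsup_congr hev]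
    exact Filter.limsup_const 1
  · rw [lowerDensity, Filter.liminf_congr hev]
    exact Filter.liminf_const 1

lemma matrixRow_apply_special (s : ℝ) (v : EucSp 2) :
    matrixRow !![s, 0] 0 v = s * v 0 := by
  simp [matrixRow, Matrix.toEuclideanLin_apply, Matrix.mulVec, dotProduct,
    Fin.sum_univ_two]

lemma jacDet_special (s : ℝ) (hs : s^2 = 1) : jacDet !![s, 0] = 1 := by
  rw [jacDet]
  have h : (!![s, 0] * (!![s, 0]).transpose).det = 1 := by
    rw [Matrix.det_fin_one, Matrix.mul_apply, Fin.sum_univ_two]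
    simp [Matrix.transpose_apply]
    nlinarith [hs]
  rw [h, Real.sqrt_one]

lemma approx_deriv (d : ℝ) {x : EucSp 2} {c r0 ρ : ℝ} (hρ : 0 < ρ) (hr0 : 0 < r0)
    (hball : Metric.ball x ρ ⊆ unitSquare)
    (haff : (∀ u : ℝ, |u - x 0| < r0 → saw d u = u + c) ∨
      (∀ u : ℝ, |u - x 0| < r0 → saw d u = c - u)) :
    ∃ D : Matrix (Fin 1) (Fin 2) ℝ,
      HasApproxDerivWithinAt unitSquare (fun y : EucSp 2 => saw d (y 0)) (matrixRow D 0) x ∧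
        jacDet D = 1 := by
  obtain ⟨s, c', hs2, hform⟩ : ∃ s c' : ℝ, s^2 = 1 ∧
      ∀ u : ℝ, |u - x 0| < r0 → saw d u = s * u + c' := by
    rcases haff with h | h
    · exact ⟨1, c, by norm_num, fun u hu => by rw [h u hu]; ring⟩
    · exact ⟨-1, c, by norm_num, fun u hu => by rw [h u hu]; ring⟩
  refine ⟨!![s, 0], ?_, jacDet_special s hs2⟩
  set ρ' : ℝ := min ρ r0 with hρ'
  have hρ'pos : 0 < ρ' := lt_min hρ hr0
  refine ⟨Metric.ball x ρ', (Metric.ball_subset_ball (min_le_left _ _)).trans hball,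
    measurableSet_ball, ?_, ?_⟩
  · -- density point
    rw [IsDensityPoint]
    have hev : (fun r : ℝ =>
        volume (Metric.ball x ρ' ∩ Metric.ball x r) / volume (Metric.ball x r))
        =ᶠ[𝓝[>] (0:ℝ)] fun _ => 1 := by
      filter_upwards [Ioo_mem_nhdsGT_of_mem ⟨le_refl (0:ℝ), hρ'pos⟩] with r hrmem
      have : Metric.ball x ρ' ∩ Metric.ball x r = Metric.ball x r :=
        Set.inter_eq_self_of_subset_right (Metric.ball_subset_ball hrmem.2.le)
      rw [this]
      exact ENNReal.div_self (Metric.measure_ball_pos _ _ hrmem.1).ne' measure_ball_lt_top.ne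
    exact Filter.Tendsto.congr' hev.symm tendsto_const_nhds
  · -- the difference quotient tends to 0
    have hzero : ∀ y ∈ Metric.ball x ρ',
        |saw d (y 0) - saw d (x 0) - matrixRow !![s, 0] 0 (y - x)| / ‖y - x‖ = 0 := by
      intro y hy
      have hy0 : |y 0 - x 0| < r0 := by
        have := coord_le_dist y x 0
        have hd := Metric.mem_ball.1 hy
        have : |y 0 - x 0| < ρ' := lt_of_le_of_lt this hd
        exact lt_of_lt_of_le this (min_le_right _ _)
      have hx0 : |x 0 - x 0| < r0 := by simpa using hr0
      have hL : matrixRow !![s, 0] 0 (y - x) = s * ((y - x : EucSp 2) 0) :=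
        matrixRow_apply_special s _
      have hsub : ((y - x : EucSp 2)) 0 = y 0 - x 0 := rfl
      rw [hform _ hy0, hform _ hx0, hL, hsub]
      have : s * y 0 + c' - (s * x 0 + c') - s * (y 0 - x 0) = 0 := by ring
      rw [this, abs_zero, zero_div]
    refine Filter.Tendsto.congr' ?_ tendsto_const_nhds
    refine Filter.eventuallyEq_of_mem self_mem_nhdsWithin fun y hy => ?_
    exact (hzero y hy).symm

end AuxLemmas3

section AuxLemmas4

def T2 : EucSp 2 ≃ᵐ ℝ × ℝ :=
  (MeasurableEquiv.toLp 2 (Fin 2 → ℝ)).symm.trans (MeasurableEquiv.finTwoArrow)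

lemma T2_apply (p : EucSp 2) : T2 p = (p 0, p 1) := rfl

lemma T2_mp : MeasurePreserving T2 :=
  (volume_preserving_finTwoArrow ℝ).comp (EuclideanSpace.volume_preserving_symm_measurableEquiv_toLp (Fin 2))

lemma T2_symm_coord (x y : ℝ) : (T2.symm (x, y)) 0 = x ∧ (T2.symm (x, y)) 1 = y := by
  have h := T2_apply (T2.symm (x, y))
  rw [MeasurableEquiv.apply_symm_apply] at h
  exact ⟨(congrArg Prod.fst h).symm, (congrArg Prod.snd h).symm⟩

lemma coord_null (i : Fin 2) (C : Set ℝ) (hC : C.Countable) :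
    volume {x : EucSp 2 | x i ∈ C} = 0 := by
  have hCm : MeasurableSet C := hC.measurableSet
  set U : Set (ℝ × ℝ) := (C ×ˢ (Set.univ : Set ℝ)) ∪ ((Set.univ : Set ℝ) ×ˢ C) with hU
  have hB : MeasurableSet U :=
    (hCm.prod MeasurableSet.univ).union (MeasurableSet.univ.prod hCm)
  have hsub : {x : EucSp 2 | x i ∈ C} ⊆ T2 ⁻¹' U := by
    intro x hx
    rw [Set.mem_preimage, T2_apply]
    rcases eq_or_ne i 0 with h | h
    · subst h
      exact Or.inl ⟨hx, trivial⟩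
    · have h1 : i = 1 := by omega
      subst h1
      exact Or.inr ⟨trivial, hx⟩
  have hC0 : volume C = 0 := hC.measure_zero _
  refine le_antisymm ?_ zero_le
  calc volume {x : EucSp 2 | x i ∈ C} ≤ volume (T2 ⁻¹' U) := measure_mono hsub
  _ = volume U := T2_mp.measure_preimage hB.nullMeasurableSet
  _ ≤ volume (C ×ˢ (Set.univ : Set ℝ)) + volume ((Set.univ : Set ℝ) ×ˢ C) :=
      measure_union_le _ _
  _ = 0 := by
      rw [Measure.volume_eq_prod, Measure.prod_prod, Measure.prod_prod, hC0]
      simp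

lemma main_bound (Λ : ℝ) (hΛ : 1 < Λ) (d : ℝ) (hd : 0 < d)
    (K : Set (EucSp 2)) (hKsub : K ⊆ unitSquare) (hK : MeasurableSet K)
    (G Ginv : EucSp 2 → EucSp 2)
    (hGinvG : ∀ x, Ginv (G x) = x) (hGGinv : ∀ x, G (Ginv x) = x)
    (hbil : ∀ x y, Λ⁻¹ * dist x y ≤ dist (G x) (G y) ∧ dist (G x) (G y) ≤ Λ * dist x y)
    (hcurve : ∀ y : ℝ, ∀ p ∈ {q : EucSp 2 | q 1 = y} ∩ G '' K,
      ∀ q ∈ {q : EucSp 2 | q 1 = y} ∩ G '' K,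
        Λ⁻¹ * dist p q ≤ dist (saw d ((Ginv p) 0)) (saw d ((Ginv q) 0)) ∧
          dist (saw d ((Ginv p) 0)) (saw d ((Ginv q) 0)) ≤ Λ * dist p q) :
    volume K ≤ ENNReal.ofReal (2 * Λ^4 * d) := by
  have hΛ0 : (0:ℝ) < Λ := lt_trans one_pos hΛ
  have hGinvLip : LipschitzWith Λ.toNNReal Ginv := by
    apply LipschitzWith.of_dist_le_mul
    intro p q
    have h := (hbil (Ginv p) (Ginv q)).1
    rw [hGGinv, hGGinv] at h
    have hco : (Λ.toNNReal : ℝ) = Λ := Real.coe_toNNReal _ hΛ0.le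
    rw [hco]
    have expand : dist (Ginv p) (Ginv q) = Λ * (Λ⁻¹ * dist (Ginv p) (Ginv q)) := by
      field_simp
    rw [expand]
    exact mul_le_mul_of_nonneg_left h hΛ0.le
  rcases Set.eq_empty_or_nonempty K with hKe | ⟨k0, hk0⟩
  · simp [hKe]
  set E : Set (EucSp 2) := G '' K with hE
  have hEGinv : ∀ p ∈ E, Ginv p ∈ K ∧ G (Ginv p) = p := by
    rintro p ⟨a, ha, rfl⟩
    rw [hGinvG]
    exact ⟨ha, rfl⟩
  have hEpre : E = Ginv ⁻¹' K := by
    ext p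
    constructor
    · intro hp
      exact (hEGinv p hp).1
    · intro hp
      exact ⟨Ginv p, hp, hGGinv p⟩
  have hEm : MeasurableSet E := by
    rw [hEpre]
    exact hGinvLip.continuous.measurable hK
  have hslice : ∀ (y : ℝ) (p q : EucSp 2), p ∈ E → q ∈ E → p 1 = y → q 1 = y →
      dist p q ≤ Λ * (d/2) := by
    intro y p q hp hq hpy hqy
    have h1 := (hcurve y p ⟨hpy, hp⟩ q ⟨hqy, hq⟩).1
    have hs1 := saw_mem d hd ((Ginv p) 0)
    have hs2 := saw_mem d hd ((Ginv q) 0)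
    have hdist : dist (saw d ((Ginv p) 0)) (saw d ((Ginv q) 0)) ≤ d/2 := by
      rw [Real.dist_eq]
      refine abs_sub_le_iff.mpr ⟨by linarith [hs1.1, hs1.2, hs2.1, hs2.2],
        by linarith [hs1.1, hs1.2, hs2.1, hs2.2]⟩
    have expand : dist p q = Λ * (Λ⁻¹ * dist p q) := by field_simp
    rw [expand]
    exact mul_le_mul_of_nonneg_left (le_trans h1 hdist) hΛ0.le
  set B : Set (ℝ × ℝ) := T2.symm ⁻¹' E with hBdef
  have hBm : MeasurableSet B := T2.symm.measurable hEm
  have hEB : volume E = (volume.prod volume) B := by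
    have h1 : T2 ⁻¹' B = E := by
      ext p
      simp [hBdef, MeasurableEquiv.symm_apply_apply]
    rw [← Measure.volume_eq_prod, ← h1, T2_mp.measure_preimage hBm.nullMeasurableSet]
  set cy : ℝ := G k0 1 with hcy
  have hslice' : ∀ y : ℝ, volume ((fun x => (x, y)) ⁻¹' B) ≤
      Set.indicator (Set.Icc (cy - 2*Λ) (cy + 2*Λ)) (fun _ => ENNReal.ofReal (Λ * (d/2))) y := by
    intro y
    by_cases hy : y ∈ Set.Icc (cy - 2*Λ) (cy + 2*Λ)
    · rw [Set.indicator_of_mem hy]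
      refine le_trans (Real.volume_le_diam _) ?_
      refine EMetric.diam_le fun a ha b hb => ?_
      have hpa : T2.symm (a, y) ∈ E := ha
      have hpb : T2.symm (b, y) ∈ E := hb
      have hca := T2_symm_coord a y
      have hcb := T2_symm_coord b y
      have hpq := hslice y _ _ hpa hpb hca.2 hcb.2
      have hab : dist a b ≤ Λ * (d/2) := by
        have h1 : |(T2.symm (a, y)) 0 - (T2.symm (b, y)) 0| ≤ dist (T2.symm (a, y)) (T2.symm (b, y)) :=
          coord_le_dist _ _ 0
        rw [hca.1, hcb.1] at h1
        rw [Real.dist_eq]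
        linarith
      rw [edist_dist]
      exact ENNReal.ofReal_le_ofReal hab
    · rw [Set.indicator_of_notMem hy]
      have hempty : (fun x => (x, y)) ⁻¹' B = ∅ := by
        rw [Set.eq_empty_iff_forall_notMem]
        intro a ha
        have hpa : T2.symm (a, y) ∈ E := ha
        have hca := T2_symm_coord a y
        obtain ⟨hKmem, hGp⟩ := hEGinv _ hpa
        have h1 : |(T2.symm (a, y)) 1 - G k0 1| ≤ dist (T2.symm (a, y)) (G k0) :=
          coord_le_dist _ _ 1
        have h2 : dist (T2.symm (a, y)) (G k0) ≤ Λ * 2 := by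
          calc dist (T2.symm (a, y)) (G k0) = dist (G (Ginv (T2.symm (a, y)))) (G k0) := by
                rw [hGp]
          _ ≤ Λ * dist (Ginv (T2.symm (a, y))) k0 := (hbil _ _).2
          _ ≤ Λ * 2 := mul_le_mul_of_nonneg_left
                (dist_le_two (hKsub hKmem) (hKsub hk0)) hΛ0.le
        rw [hca.2] at h1
        have := abs_le.1 (le_trans h1 h2)
        exact hy ⟨by linarith [this.1], by linarith [this.2]⟩
      rw [hempty]
      simp
  have hEvol : volume E ≤ ENNReal.ofReal (Λ * (d/2)) * ENNReal.ofReal (4*Λ) := by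
    rw [hEB, Measure.prod_apply_symm hBm]
    calc ∫⁻ y, volume ((fun x => (x, y)) ⁻¹' B) ∂volume
        ≤ ∫⁻ y, Set.indicator (Set.Icc (cy - 2*Λ) (cy + 2*Λ))
            (fun _ => ENNReal.ofReal (Λ * (d/2))) y ∂volume := lintegral_mono hslice'
    _ = ENNReal.ofReal (Λ * (d/2)) * volume (Set.Icc (cy - 2*Λ) (cy + 2*Λ)) :=
        lintegral_indicator_const measurableSet_Icc _
    _ = ENNReal.ofReal (Λ * (d/2)) * ENNReal.ofReal (4*Λ) := by
        rw [Real.volume_Icc]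
        congr 1
        ring_nf
  -- Haar measure comparison
  haveI hinst : Measure.IsAddHaarMeasure (μH[(2:ℝ)] : Measure (EucSp 2)) := by
    have h2 : ((Module.finrank ℝ (EucSp 2) : ℕ) : ℝ) = 2 := by
      rw [finrank_euclideanSpace_fin]; norm_num
    rw [← h2]
    infer_instance
  have hvol_smul : (volume : Measure (EucSp 2))
      = Measure.addHaarScalarFactor (volume : Measure (EucSp 2)) (μH[(2:ℝ)]) • (μH[(2:ℝ)]) :=
    Measure.isAddLeftInvariant_eq_smul _ _
  have hKimg : Ginv '' E = K := by
    rw [hE, Set.image_image]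
    simp only [hGinvG]
    exact Set.image_id K
  have hH : μH[(2:ℝ)] (Ginv '' E) ≤ (Λ.toNNReal : ℝ≥0∞)^(2:ℝ) * μH[(2:ℝ)] E :=
    hGinvLip.hausdorffMeasure_image_le (by norm_num) E
  set c : ℝ≥0 := Measure.addHaarScalarFactor (volume : Measure (EucSp 2)) (μH[(2:ℝ)]) with hc
  have hKE : volume K ≤ (Λ.toNNReal : ℝ≥0∞)^(2:ℝ) * volume E := by
    calc volume K = volume (Ginv '' E) := by rw [hKimg]
    _ = c * μH[(2:ℝ)] (Ginv '' E) := by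
        conv_lhs => rw [hvol_smul]
        rw [Measure.smul_apply, ENNReal.smul_def, smul_eq_mul]
    _ ≤ c * ((Λ.toNNReal : ℝ≥0∞)^(2:ℝ) * μH[(2:ℝ)] E) := mul_le_mul_right hH _
    _ = (Λ.toNNReal : ℝ≥0∞)^(2:ℝ) * (c * μH[(2:ℝ)] E) := by ring
    _ = (Λ.toNNReal : ℝ≥0∞)^(2:ℝ) * volume E := by
        conv_rhs => rw [hvol_smul]
        rw [Measure.smul_apply, ENNReal.smul_def, smul_eq_mul]
  have hpow : ((Λ.toNNReal : ℝ≥0∞))^(2:ℝ) = ENNReal.ofReal (Λ^2) := by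
    have h1 : ((Λ.toNNReal : ℝ≥0∞))^(2:ℝ) = ((Λ.toNNReal : ℝ≥0∞))^(2:ℕ) := by
      rw [← ENNReal.rpow_natCast]
      norm_num
    rw [h1, ENNReal.ofReal_pow hΛ0.le]
    rfl
  calc volume K ≤ (Λ.toNNReal : ℝ≥0∞)^(2:ℝ) * volume E := hKE
  _ ≤ ENNReal.ofReal (Λ^2) * (ENNReal.ofReal (Λ * (d/2)) * ENNReal.ofReal (4*Λ)) := by
      rw [hpow]
      exact mul_le_mul_right hEvol _
  _ = ENNReal.ofReal (2 * Λ^4 * d) := by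
      rw [← ENNReal.ofReal_mul (by positivity), ← ENNReal.ofReal_mul (by positivity)]
      congr 1
      ring

end AuxLemmas4


/-- Proposition fold: fix `Λ > 1`. For every `ε > 0` there is a
Lipschitz map `f : [0,1]² → ℝ` with `Θ^{*1}(f,x) = Θ_*^1(f,x) = |J^1 f|(x) = 1` a.e.,
such that for every measurable `K ⊆ [0,1]²` and every `Λ`-bi-Lipschitz homeomorphism
`G : ℝ² → ℝ²` for which `f ∘ G⁻¹` restricted to `(ℝ × {y}) ∩ G(K)` is `Λ`-bi-Lipschitz
for every `y ∈ ℝ`, one has `ℋ²(K) < ε`. -/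
theorem stmt14 (Λ : ℝ) (hΛ : 1 < Λ) (ε : ℝ) (hε : 0 < ε) :
    ∃ f : EucSp 2 → ℝ,
      (∃ L : ℝ≥0, LipschitzOnWith L f unitSquare) ∧
      (∀ᵐ x ∂(volume.restrict unitSquare),
        upperDensity 1 f unitSquare x = 1 ∧ lowerDensity 1 f unitSquare x = 1 ∧
        ∃ D : Matrix (Fin 1) (Fin 2) ℝ,
          HasApproxDerivWithinAt unitSquare f (matrixRow D 0) x ∧ jacDet D = 1) ∧
      ∀ (K : Set (EucSp 2)), K ⊆ unitSquare → MeasurableSet K →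
      ∀ (G Ginv : EucSp 2 → EucSp 2),
        (∀ x, Ginv (G x) = x) → (∀ x, G (Ginv x) = x) →
        (∀ x y, Λ⁻¹ * dist x y ≤ dist (G x) (G y) ∧ dist (G x) (G y) ≤ Λ * dist x y) →
        (∀ y : ℝ, ∀ p ∈ {q : EucSp 2 | q 1 = y} ∩ G '' K,
          ∀ q ∈ {q : EucSp 2 | q 1 = y} ∩ G '' K,
            Λ⁻¹ * dist p q ≤ dist (f (Ginv p)) (f (Ginv q)) ∧
              dist (f (Ginv p)) (f (Ginv q)) ≤ Λ * dist p q) →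
        volume K < ENNReal.ofReal ε := by
  have hΛ0 : (0:ℝ) < Λ := lt_trans one_pos hΛ
  set d : ℝ := ε / (4 * Λ^4) with hddef
  have hd : 0 < d := by positivity
  refine ⟨fun y : EucSp 2 => saw d (y 0), ⟨1, ?_⟩, ?_, ?_⟩
  · exact (by simpa [Function.comp_def] using (saw_lip d).comp (lip_coord 0) :
      LipschitzWith 1 (fun y : EucSp 2 => saw d (y 0))).lipschitzOnWith
  · -- a.e. statement
    set M : Set ℝ := Set.range (fun k : ℤ => d/2 * k) with hM
    have hMc : M.Countable := Set.countable_range _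
    have h01c : ({0, 1} : Set ℝ).Countable := (Set.countable_singleton 1).insert 0
    set Bad : Set (EucSp 2) :=
      {x : EucSp 2 | x 0 ∈ M ∪ {0, 1}} ∪ {x : EucSp 2 | x 1 ∈ ({0, 1} : Set ℝ)} with hBad
    have hBadnull : volume Bad = 0 :=
      measure_union_null (coord_null 0 _ (hMc.union h01c)) (coord_null 1 _ h01c)
    have hae : ∀ᵐ x : EucSp 2 ∂volume, x ∉ Bad :=
      (measure_eq_zero_iff_ae_notMem).1 hBadnull
    filter_upwards [ae_restrict_of_ae hae, ae_restrict_mem measurableSet_unitSquare]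
      with x hxB hxS
    simp only [hBad, Set.mem_union, Set.mem_setOf_eq, not_or] at hxB
    have hx0M : x 0 ∉ M := hxB.1.1
    have hx001 : x 0 ∉ ({0, 1} : Set ℝ) := hxB.1.2
    have hx1 : x 1 ∉ ({0, 1} : Set ℝ) := hxB.2
    have hIoo : ∀ i, x i ∈ Set.Ioo (0:ℝ) 1 := by
      rw [Fin.forall_fin_two]
      constructor
      · have := hxS 0
        simp only [Set.mem_insert_iff, Set.mem_singleton_iff, not_or] at hx001
        exact ⟨lt_of_le_of_ne this.1 (Ne.symm hx001.1), lt_of_le_of_ne this.2 hx001.2⟩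
      · have := hxS 1
        simp only [Set.mem_insert_iff, Set.mem_singleton_iff, not_or] at hx1
        exact ⟨lt_of_le_of_ne this.1 (Ne.symm hx1.1), lt_of_le_of_ne this.2 hx1.2⟩
    have hMx : ∀ k : ℤ, x 0 ≠ d/2 * k := by
      intro k h
      exact hx0M ⟨k, h.symm⟩
    obtain ⟨ρ, hρ, hball⟩ := ball_subset_unitSquare hIoo
    obtain ⟨r0, hr0, c, haff⟩ := saw_affine d hd (x 0) hMx
    exact ⟨(density_one d hρ hr0 hball haff).1, (density_one d hρ hr0 hball haff).2,
      approx_deriv d hρ hr0 hball haff⟩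
  · -- the main bound
    intro K hKsub hK G Ginv hGinvG hGGinv hbil hcurve
    have hbound := main_bound Λ hΛ d hd K hKsub hK G Ginv hGinvG hGGinv hbil hcurve
    refine lt_of_le_of_lt hbound ?_
    rw [ENNReal.ofReal_lt_ofReal_iff hε]
    have hΛ4 : (0:ℝ) < Λ^4 := by positivity
    rw [hddef, show 2*Λ^4*(ε/(4*Λ^4)) = ε/2 by field_simp; ring]
    linarith

end
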